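/- Let a : [0,∞) → ℝ be continuous with a(0) > 0 and limsup a(r)/r < 0, and define φ(r) = exp(−(1/2)∫₀^r a(s)⁺ ds), Φ(r) = ∫₀^r φ(s) ds, R₀, R₁ as above, g(r) = 1 − (1/4)∫₀^{r∧R₁} (Φ(s)/φ(s)) ds / ∫₀^{R₁} (Φ(s)/φ(s)) ds − (1/4)∫₀^{r∧R₁} (1/φ(s)) ds / ∫₀^{R₁} (1/φ(s)) ds, and f(r) = ∫₀^r φ(s) g(s) ds. Then 1/2 ≤ g(r) ≤ 1 for all r ≥ 0, f is nondecreasing and concave, and Φ(r)/2 ≤ f(r) ≤ Φ(r) ≤ r for all r ≥ 0. -/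

import Mathlib

open Filter MeasureTheory

/-- If `h` is continuous and nonnegative on `[u, v]` with `u ≤ v`, then the primitive
from `0` is monotone between these endpoints. -/
lemma primitive_mono_endpoint {h : ℝ → ℝ} (hc : Continuous h) {u v : ℝ} (huv : u ≤ v)
    (hnn : ∀ s ∈ Set.Icc u v, 0 ≤ h s) :
    (∫ s in (0:ℝ)..u, h s) ≤ ∫ s in (0:ℝ)..v, h s := by
  have h1 := intervalIntegral.integral_add_adjacent_intervals
    (hc.intervalIntegrable (μ := MeasureTheory.volume) 0 u)
    (hc.intervalIntegrable (μ := MeasureTheory.volume) u v)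
  have h2 : 0 ≤ ∫ s in u..v, h s := intervalIntegral.integral_nonneg huv hnn
  linarith

theorem f_g_properties (a φ Φ g f : ℝ → ℝ) (R₀ R₁ : ℝ)
    (ha : Continuous a) (ha0 : 0 < a 0)
    (hlim : limsup (fun r => a r / r) atTop < 0)
    (hφ : ∀ r, φ r = Real.exp (-(1/2) * ∫ s in (0:ℝ)..r, max (a s) 0))
    (hΦ : ∀ r, Φ r = ∫ s in (0:ℝ)..r, φ s)
    (hR₀ : R₀ = sInf {R : ℝ | 0 ≤ R ∧ ∀ r ≥ R, a r ≤ 0})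
    (hR₁ : R₁ = sInf {R : ℝ | R₀ ≤ R ∧ ∀ r ≥ R, R * (R - R₀) * (a r / r) ≤ -4})
    (hg : ∀ r, g r = 1
        - (1/4) * (∫ s in (0:ℝ)..(min r R₁), Φ s / φ s) /
            (∫ s in (0:ℝ)..R₁, Φ s / φ s)
        - (1/4) * (∫ s in (0:ℝ)..(min r R₁), 1 / φ s) /
            (∫ s in (0:ℝ)..R₁, 1 / φ s))
    (hf : ∀ r, f r = ∫ s in (0:ℝ)..r, φ s * g s) :
    (∀ r ≥ (0:ℝ), 1/2 ≤ g r ∧ g r ≤ 1) ∧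
    MonotoneOn f (Set.Ici 0) ∧
    ConcaveOn ℝ (Set.Ici 0) f ∧
    (∀ r ≥ (0:ℝ), Φ r / 2 ≤ f r ∧ f r ≤ Φ r ∧ Φ r ≤ r) := by
  -- basic facts about φ
  have hφpos : ∀ r, 0 < φ r := fun r => (hφ r) ▸ Real.exp_pos _
  have hamax : Continuous fun s => max (a s) 0 := ha.max continuous_const
  have hIcont : Continuous fun r => ∫ s in (0:ℝ)..r, max (a s) 0 :=
    intervalIntegral.continuous_primitive (fun _ _ => hamax.intervalIntegrable _ _) 0
  have hφcont : Continuous φ := by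
    rw [funext hφ]
    exact Real.continuous_exp.comp (continuous_const.mul hIcont)
  have hφle1 : ∀ r, 0 ≤ r → φ r ≤ 1 := by
    intro r hr
    rw [hφ r, Real.exp_le_one_iff]
    have : 0 ≤ ∫ s in (0:ℝ)..r, max (a s) 0 :=
      intervalIntegral.integral_nonneg hr (fun u _ => le_max_right _ _)
    nlinarith
  have hφanti : AntitoneOn φ (Set.Ici 0) := by
    intro x hx y hy hxy
    rw [hφ x, hφ y]
    apply Real.exp_le_exp.2
    have := primitive_mono_endpoint hamax hxy (fun s _ => le_max_right _ _)
    nlinarith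
  -- basic facts about Φ
  have hΦcont : Continuous Φ := by
    rw [funext hΦ]
    exact intervalIntegral.continuous_primitive (fun _ _ => hφcont.intervalIntegrable _ _) 0
  have hΦnonneg : ∀ r, 0 ≤ r → 0 ≤ Φ r := by
    intro r hr
    rw [hΦ r]
    exact intervalIntegral.integral_nonneg hr (fun u _ => (hφpos u).le)
  have hΦpos : ∀ r, 0 < r → 0 < Φ r := by
    intro r hr
    rw [hΦ r]
    exact intervalIntegral.intervalIntegral_pos_of_pos_on
      (hφcont.intervalIntegrable 0 r) (fun x _ => hφpos x) hr
  -- R₀, R₁ nonneg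
  have hR₀0 : 0 ≤ R₀ := hR₀ ▸ Real.sInf_nonneg (fun x hx => hx.1)
  have hR₁0 : 0 ≤ R₁ := hR₁ ▸ Real.sInf_nonneg (fun x hx => hR₀0.trans hx.1)
  -- the two integrands in g
  set p : ℝ → ℝ := fun s => Φ s / φ s with hp
  set q : ℝ → ℝ := fun s => 1 / φ s with hq
  have hpcont : Continuous p := hΦcont.div hφcont (fun s => (hφpos s).ne')
  have hqcont : Continuous q := continuous_const.div hφcont (fun s => (hφpos s).ne')
  have hpnn : ∀ s, 0 ≤ s → 0 ≤ p s := fun s hs => div_nonneg (hΦnonneg s hs) (hφpos s).le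
  have hqnn : ∀ s, 0 ≤ q s := fun s => div_nonneg one_pos.le (hφpos s).le
  -- bounds on the two ratio terms in g, for r ≥ 0
  have hratio : ∀ (h : ℝ → ℝ), Continuous h → (∀ s, 0 ≤ s → 0 ≤ h s) →
      (R₁ = 0 ∨ 0 < ∫ s in (0:ℝ)..R₁, h s) →
      ∀ r, 0 ≤ r →
      0 ≤ (∫ s in (0:ℝ)..(min r R₁), h s) / (∫ s in (0:ℝ)..R₁, h s) ∧
      (∫ s in (0:ℝ)..(min r R₁), h s) / (∫ s in (0:ℝ)..R₁, h s) ≤ 1 := by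
    intro h hc hnn hcase r hr
    rcases hcase with h0 | hpos
    · have : min r R₁ = 0 := by rw [h0]; exact min_eq_right hr
      rw [this, intervalIntegral.integral_same, zero_div]
      norm_num
    · have hm0 : 0 ≤ min r R₁ := le_min hr hR₁0
      have hnum0 : 0 ≤ ∫ s in (0:ℝ)..(min r R₁), h s := by
        have := primitive_mono_endpoint hc hm0 (fun s hs => hnn s hs.1)
        simpa using this
      have hnum1 : (∫ s in (0:ℝ)..(min r R₁), h s) ≤ ∫ s in (0:ℝ)..R₁, h s :=
        primitive_mono_endpoint hc (min_le_right r R₁)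
          (fun s hs => hnn s (hm0.trans hs.1))
      exact ⟨div_nonneg hnum0 hpos.le, (div_le_one hpos).2 hnum1⟩
  -- the denominators are positive when R₁ > 0
  have hcaseP : R₁ = 0 ∨ 0 < ∫ s in (0:ℝ)..R₁, p s := by
    rcases eq_or_lt_of_le hR₁0 with h0 | h0
    · exact Or.inl h0.symm
    · refine Or.inr (intervalIntegral.intervalIntegral_pos_of_pos_on
        (hpcont.intervalIntegrable 0 R₁) (fun x hx => ?_) h0)
      exact div_pos (hΦpos x hx.1) (hφpos x)
  have hcaseQ : R₁ = 0 ∨ 0 < ∫ s in (0:ℝ)..R₁, q s := by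
    rcases eq_or_lt_of_le hR₁0 with h0 | h0
    · exact Or.inl h0.symm
    · exact Or.inr (intervalIntegral.intervalIntegral_pos_of_pos_on
        (hqcont.intervalIntegrable 0 R₁)
        (fun x _ => div_pos one_pos (hφpos x)) h0)
  -- bounds on g
  have hgbd : ∀ r, 0 ≤ r → 1/2 ≤ g r ∧ g r ≤ 1 := by
    intro r hr
    have h1 := hratio p hpcont hpnn hcaseP r hr
    have h2 := hratio q hqcont (fun s _ => hqnn s) hcaseQ r hr
    rw [hg r]
    have e1 : (1:ℝ)/4 * (∫ s in (0:ℝ)..(min r R₁), p s) / (∫ s in (0:ℝ)..R₁, p s)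
        = 1/4 * ((∫ s in (0:ℝ)..(min r R₁), p s) / (∫ s in (0:ℝ)..R₁, p s)) := by
      ring
    have e2 : (1:ℝ)/4 * (∫ s in (0:ℝ)..(min r R₁), q s) / (∫ s in (0:ℝ)..R₁, q s)
        = 1/4 * ((∫ s in (0:ℝ)..(min r R₁), q s) / (∫ s in (0:ℝ)..R₁, q s)) := by
      ring
    constructor <;> simp only [hp, hq] at e1 e2 h1 h2 <;> rw [e1, e2] <;> nlinarith [h1.1, h1.2, h2.1, h2.2]
  -- g is antitone on [0, ∞)
  have hganti : AntitoneOn g (Set.Ici 0) := by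
    intro x hx y hy hxy
    simp only [Set.mem_Ici] at hx hy
    have hmono : ∀ (h : ℝ → ℝ), Continuous h → (∀ s, 0 ≤ s → 0 ≤ h s) →
        (∫ s in (0:ℝ)..(min x R₁), h s) ≤ ∫ s in (0:ℝ)..(min y R₁), h s := by
      intro h hc hnn
      exact primitive_mono_endpoint hc (min_le_min hxy le_rfl)
        (fun s hs => hnn s ((le_min hx hR₁0).trans hs.1))
    have h1 := hmono p hpcont hpnn
    have h2 := hmono q hqcont (fun s _ => hqnn s)
    have hdP : 0 ≤ ∫ s in (0:ℝ)..R₁, p s := by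
      rcases hcaseP with h0 | h0
      · rw [h0, intervalIntegral.integral_same]
      · exact h0.le
    have hdQ : 0 ≤ ∫ s in (0:ℝ)..R₁, q s := by
      rcases hcaseQ with h0 | h0
      · rw [h0, intervalIntegral.integral_same]
      · exact h0.le
    rw [hg x, hg y]
    have key : ∀ A B d : ℝ, A ≤ B → 0 ≤ d → 1/4 * A / d ≤ 1/4 * B / d := by
      intro A B d hAB hd
      rcases eq_or_lt_of_le hd with h0 | h0
      · rw [← h0, div_zero, div_zero]
      · exact (div_le_div_iff_of_pos_right h0).2 (by linarith)
    have t1 := key _ _ _ h1 hdP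
    have t2 := key _ _ _ h2 hdQ
    simp only [hp, hq] at t1 t2
    linarith
  -- continuity of g and f
  have hgcont : Continuous g := by
    rw [funext hg]
    have hminc : Continuous fun r : ℝ => min r R₁ := continuous_id.min continuous_const
    have c1 : Continuous fun r : ℝ => ∫ s in (0:ℝ)..(min r R₁), Φ s / φ s :=
      (intervalIntegral.continuous_primitive
        (fun _ _ => hpcont.intervalIntegrable _ _) 0).comp hminc
    have c2 : Continuous fun r : ℝ => ∫ s in (0:ℝ)..(min r R₁), 1 / φ s :=
      (intervalIntegral.continuous_primitive
        (fun _ _ => hqcont.intervalIntegrable _ _) 0).comp hminc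
    fun_prop
  have hhcont : Continuous fun s => φ s * g s := hφcont.mul hgcont
  -- the integrand of f is nonneg and antitone on [0, ∞)
  have hhnn : ∀ s, 0 ≤ s → 0 ≤ φ s * g s := by
    intro s hs
    have := (hgbd s hs).1
    nlinarith [hφpos s]
  have hhanti : AntitoneOn (fun s => φ s * g s) (Set.Ici 0) := by
    intro x hx y hy hxy
    simp only [Set.mem_Ici] at hx hy
    have h1 : φ y * g y ≤ φ y * g x :=
      mul_le_mul_of_nonneg_left (hganti hx hy hxy) (hφpos y).le
    have h2 : φ y * g x ≤ φ x * g x := by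
      have hgnn : 0 ≤ g x := le_trans (by norm_num) (hgbd x hx).1
      exact mul_le_mul_of_nonneg_right (hφanti hx hy hxy) hgnn
    exact h1.trans h2
  have hfeq : f = fun r => ∫ s in (0:ℝ)..r, φ s * g s := funext hf
  have hfcont : Continuous f := by
    rw [hfeq]
    exact intervalIntegral.continuous_primitive
      (fun _ _ => hhcont.intervalIntegrable _ _) 0
  -- monotonicity of f
  have hfmono : MonotoneOn f (Set.Ici 0) := by
    intro x hx y hy hxy
    simp only [Set.mem_Ici] at hx hy
    rw [hf x, hf y]
    exact primitive_mono_endpoint hhcont hxy (fun s hs => hhnn s (hx.trans hs.1))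
  -- concavity of f
  have hfconc : ConcaveOn ℝ (Set.Ici 0) f := by
    have hderiv : ∀ b : ℝ, HasDerivAt f (φ b * g b) b := by
      intro b
      rw [hfeq]
      exact (hhcont.integral_hasStrictDerivAt 0 b).hasDerivAt
    apply AntitoneOn.concaveOn_of_deriv (convex_Ici 0) hfcont.continuousOn
    · intro x _
      exact (hderiv x).differentiableAt.differentiableWithinAt
    · intro x hx y hy hxy
      rw [(hderiv x).deriv, (hderiv y).deriv]
      rw [interior_Ici] at hx hy
      exact hhanti (Set.mem_Ici.2 (le_of_lt (Set.mem_Ioi.1 hx))) (Set.mem_Ici.2 (le_of_lt (Set.mem_Ioi.1 hy))) hxy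
  refine ⟨fun r hr => hgbd r hr, hfmono, hfconc, fun r hr => ?_⟩
  have hfint : IntervalIntegrable (fun s => φ s * g s) volume 0 r :=
    hhcont.intervalIntegrable 0 r
  have hφint : IntervalIntegrable φ volume 0 r := hφcont.intervalIntegrable 0 r
  refine ⟨?_, ?_, ?_⟩
  · -- Φ r / 2 ≤ f r
    rw [hf r, hΦ r, div_eq_mul_inv, ← intervalIntegral.integral_mul_const]
    apply intervalIntegral.integral_mono_on hr (hφint.mul_const _) hfint
    intro x hx
    have := (hgbd x hx.1).1
    have := (hφpos x).le
    nlinarith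
  · -- f r ≤ Φ r
    rw [hf r, hΦ r]
    apply intervalIntegral.integral_mono_on hr hfint hφint
    intro x hx
    have := (hgbd x hx.1).2
    nlinarith [hφpos x]
  · -- Φ r ≤ r
    rw [hΦ r]
    calc (∫ s in (0:ℝ)..r, φ s) ≤ ∫ _ in (0:ℝ)..r, (1:ℝ) := by
          apply intervalIntegral.integral_mono_on hr hφint
            (intervalIntegrable_const)
          exact fun x hx => hφle1 x hx.1
      _ = r := by simp
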